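/- Let g* = (g*₁,…,g*_K) be a minimizer of 𝒢^L over all potentials. Then for every i ∈ {1,…,K} and every x_i ∈ 𝒳_i, −(L − 1) + η log(min_{j∈{1,…,K}, y∈𝒳ⱼ} μⱼ(y)) − ηL log(K C* n) ≤ g*_i(x_i) ≤ 1. -/

import Mathlib

open scoped ENNReal BigOperators

noncomputable section

/-- `S_K^L`: the nonempty subsets of `{1,…,K}` of size at most `L`. -/
def SKL (K L : ℕ) : Finset (Finset (Fin K)) :=
  Finset.univ.filter fun A => A.Nonempty ∧ A.card ≤ L

/-- `S_K^L(i)`: the members of `S_K^L` containing `i`. -/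
def SKLi (K L : ℕ) (i : Fin K) : Finset (Finset (Fin K)) :=
  (SKL K L).filter fun A => i ∈ A

variable {K : ℕ} (𝒳 : Fin K → Type*) [∀ i, Fintype (𝒳 i)] [∀ i, DecidableEq (𝒳 i)]

/-- The `i`-th marginal `Pᵢ#π_A` of a coupling `π_A` on `𝒳^A`
(zero when `i ∉ A`). -/
def marg (A : Finset (Fin K)) (π : ((j : A) → 𝒳 j.1) → ℝ) (i : Fin K) (xi : 𝒳 i) : ℝ :=
  if hi : i ∈ A then
    ∑ x : (j : A) → 𝒳 j.1, (if x ⟨i, hi⟩ = xi then π x else 0)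
  else 0

/-- `Σ_{A ∈ S_K^L(i)} Pᵢ#π_A`, evaluated at `xi`. -/
def totMarg (L : ℕ) (π : (A : Finset (Fin K)) → ((j : A) → 𝒳 j.1) → ℝ)
    (i : Fin K) (xi : 𝒳 i) : ℝ :=
  ∑ A ∈ SKLi K L i, marg 𝒳 A (π A) i xi

/-- The couplings `π_A(g)` induced by potentials `g`, interpreted as `0` where the
cost is `+∞`. -/
def piInd (η : ℝ) (c : (A : Finset (Fin K)) → ((j : A) → 𝒳 j.1) → ℝ≥0∞)
    (g : (i : Fin K) → 𝒳 i → ℝ) (A : Finset (Fin K)) (x : (j : A) → 𝒳 j.1) : ℝ :=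
  if c A x = ⊤ then 0
  else Real.exp ((∑ j : A, g j.1 (x j) - (1 + (c A x).toReal)) / η)

/-- The dual objective `𝒢^L`. -/
def dualObj (η : ℝ) (L : ℕ) (c : (A : Finset (Fin K)) → ((j : A) → 𝒳 j.1) → ℝ≥0∞)
    (μ : (i : Fin K) → 𝒳 i → ℝ) (g : (i : Fin K) → 𝒳 i → ℝ) : ℝ :=
  (∑ A ∈ SKL K L, ∑ x : (j : A) → 𝒳 j.1, piInd 𝒳 η c g A x)
    - (1 / η) * ∑ i : Fin K, ∑ xi : 𝒳 i, g i xi * μ i xi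

/-- Unnormalized Kullback–Leibler divergence (convention `0 · log 0 = 0`). -/
def KLdiv {Z : Type*} [Fintype Z] (α β : Z → ℝ) : ℝ :=
  (∑ z, (β z - α z)) + ∑ z, α z * Real.log (α z / β z)

/-- ℓ¹ norm of a vector on a finite set. -/
def l1 {Z : Type*} [Fintype Z] (v : Z → ℝ) : ℝ := ∑ z, |v z|

/-- `g : ℕ → potentials` is generated by the greedy Sinkhorn iteration: `g⁰ = 0`,
and at each step a coordinate `I` maximizing the KL-discrepancy of the `I`-th
marginal is updated by the Sinkhorn formula, all others kept fixed. -/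
def IsGreedySinkhorn (η : ℝ) (L : ℕ)
    (c : (A : Finset (Fin K)) → ((j : A) → 𝒳 j.1) → ℝ≥0∞)
    (μ : (i : Fin K) → 𝒳 i → ℝ) (g : ℕ → (i : Fin K) → 𝒳 i → ℝ) : Prop :=
  (∀ i xi, g 0 i xi = 0) ∧
  ∀ t : ℕ, ∃ I : Fin K,
    (∀ i : Fin K,
      KLdiv (μ i) (totMarg 𝒳 L (piInd 𝒳 η c (g t)) i) ≤
        KLdiv (μ I) (totMarg 𝒳 L (piInd 𝒳 η c (g t)) I)) ∧
    (∀ xI : 𝒳 I, g (t + 1) I xI =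
      g t I xI + η * Real.log (μ I xI)
        - η * Real.log (totMarg 𝒳 L (piInd 𝒳 η c (g t)) I xI)) ∧
    (∀ i : Fin K, i ≠ I → g (t + 1) i = g t i)

/-- The marginal error `E_t` of the greedy Sinkhorn iteration. -/
def Err (η : ℝ) (L : ℕ) (c : (A : Finset (Fin K)) → ((j : A) → 𝒳 j.1) → ℝ≥0∞)
    (μ : (i : Fin K) → 𝒳 i → ℝ) (g : ℕ → (i : Fin K) → 𝒳 i → ℝ) (t : ℕ) : ℝ :=
  ∑ i : Fin K,
    l1 (fun xi : 𝒳 i => μ i xi - totMarg 𝒳 L (piInd 𝒳 η c (g t)) i xi)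

/-- `C* := maxᵢ nᵢ / n`. -/
def Cstar (n : ℝ) : ℝ := ((Finset.univ.sup fun i : Fin K => Fintype.card (𝒳 i) : ℕ) : ℝ) / n

/-- `min_{j, y} μ_j(y)`. -/
def muMin (μ : (i : Fin K) → 𝒳 i → ℝ) : ℝ :=
  sInf {v : ℝ | ∃ (j : Fin K) (y : 𝒳 j), v = μ j y}

/-- `R̄ := L − η log min_{j,y} μ_j(y) + η L log(K C* n)`. -/
def Rbar (η : ℝ) (L : ℕ) (n : ℝ) (μ : (i : Fin K) → 𝒳 i → ℝ) : ℝ :=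
  (L : ℝ) - η * Real.log (muMin 𝒳 μ) + η * L * Real.log (K * Cstar 𝒳 n * n)



lemma piInd_nonneg (η : ℝ) (c : (A : Finset (Fin K)) → ((j : A) → 𝒳 j.1) → ℝ≥0∞)
    (g : (i : Fin K) → 𝒳 i → ℝ) (A : Finset (Fin K)) (x : (j : A) → 𝒳 j.1) :
    0 ≤ piInd 𝒳 η c g A x := by
  unfold piInd; split
  · exact le_rfl
  · exact (Real.exp_pos _).le

lemma marg_nonneg {A : Finset (Fin K)} {π : ((j : A) → 𝒳 j.1) → ℝ}
    (hπ : ∀ x, 0 ≤ π x) (i : Fin K) (xi : 𝒳 i) : 0 ≤ marg 𝒳 A π i xi := by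
  unfold marg; split
  · refine Finset.sum_nonneg fun x _ => ?_
    split
    · exact hπ x
    · exact le_rfl
  · exact le_rfl

lemma stationarity (η : ℝ) (hη : 0 < η) (L : ℕ)
    (c : (A : Finset (Fin K)) → ((j : A) → 𝒳 j.1) → ℝ≥0∞)
    (μ : (i : Fin K) → 𝒳 i → ℝ)
    (gstar : (i : Fin K) → 𝒳 i → ℝ)
    (hstar : ∀ g' : (i : Fin K) → 𝒳 i → ℝ,
      dualObj 𝒳 η L c μ gstar ≤ dualObj 𝒳 η L c μ g')
    (i : Fin K) (xi : 𝒳 i) :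
    totMarg 𝒳 L (piInd 𝒳 η c gstar) i xi = μ i xi := by
  classical
  set T := totMarg 𝒳 L (piInd 𝒳 η c gstar) i xi with hT
  have key : ∀ s : ℝ, 0 ≤ T * (Real.exp s - 1) - s * μ i xi := by
    intro s
    set gs : (j : Fin K) → 𝒳 j → ℝ :=
      Function.update gstar i (fun y => gstar i y + if y = xi then s * η else 0) with hgs
    have hgs_ne : ∀ j, j ≠ i → gs j = gstar j := fun j hj =>
      Function.update_of_ne hj _ _
    have hgs_i : ∀ y : 𝒳 i, gs i y = gstar i y + (if y = xi then s * η else 0) := by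
      intro y; rw [hgs]; simp [Function.update_self]
    have claim1 : ∀ (A : Finset (Fin K)) (x : (j : A) → 𝒳 j.1),
        piInd 𝒳 η c gs A x
          = piInd 𝒳 η c gstar A x *
            (if h : i ∈ A then (if x ⟨i, h⟩ = xi then Real.exp s else 1) else 1) := by
      intro A x
      by_cases hiA : i ∈ A
      · rw [dif_pos hiA]
        have hsum : (∑ j : A, gs j.1 (x j))
            = (∑ j : A, gstar j.1 (x j)) + (if x ⟨i, hiA⟩ = xi then s * η else 0) := by
          have h1 : (∑ j : A, gs j.1 (x j))
              = gs i (x ⟨i, hiA⟩)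
                + ∑ j ∈ Finset.univ.erase (⟨i, hiA⟩ : A), gs j.1 (x j) :=
            (Finset.add_sum_erase Finset.univ (fun j : A => gs j.1 (x j))
              (Finset.mem_univ (⟨i, hiA⟩ : A))).symm
          have h2 : (∑ j : A, gstar j.1 (x j))
              = gstar i (x ⟨i, hiA⟩)
                + ∑ j ∈ Finset.univ.erase (⟨i, hiA⟩ : A), gstar j.1 (x j) :=
            (Finset.add_sum_erase Finset.univ (fun j : A => gstar j.1 (x j))
              (Finset.mem_univ (⟨i, hiA⟩ : A))).symm
          have h3 : (∑ j ∈ Finset.univ.erase (⟨i, hiA⟩ : A), gs j.1 (x j))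
              = ∑ j ∈ Finset.univ.erase (⟨i, hiA⟩ : A), gstar j.1 (x j) := by
            refine Finset.sum_congr rfl fun j hj => ?_
            have hne : (j : Fin K) ≠ i := fun h => (Finset.mem_erase.mp hj).1 (Subtype.ext h)
            rw [hgs_ne _ hne]
          rw [h1, h2, h3, hgs_i]
          ring
        unfold piInd
        by_cases hct : c A x = ⊤
        · rw [if_pos hct, if_pos hct, zero_mul]
        · rw [if_neg hct, if_neg hct, hsum]
          by_cases hxe : x ⟨i, hiA⟩ = xi
          · rw [if_pos hxe, if_pos hxe,
              show (∑ j : A, gstar j.1 (x j)) + s * η - (1 + (c A x).toReal)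
                = ((∑ j : A, gstar j.1 (x j)) - (1 + (c A x).toReal)) + s * η from by ring,
              add_div, Real.exp_add, mul_div_assoc, div_self hη.ne', mul_one]
          · rw [if_neg hxe, if_neg hxe, add_zero, mul_one]
      · rw [dif_neg hiA, mul_one]
        unfold piInd
        have hsum : (∑ j : A, gs j.1 (x j)) = (∑ j : A, gstar j.1 (x j)) := by
          refine Finset.sum_congr rfl fun j _ => ?_
          have hne : (j : Fin K) ≠ i := fun h => hiA (h ▸ j.2)
          rw [hgs_ne _ hne]
        rw [hsum]
    have claim2 : ∀ A : Finset (Fin K),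
        (∑ x : (j : A) → 𝒳 j.1, piInd 𝒳 η c gs A x)
          = (∑ x : (j : A) → 𝒳 j.1, piInd 𝒳 η c gstar A x)
            + (Real.exp s - 1)
              * (if i ∈ A then marg 𝒳 A (piInd 𝒳 η c gstar A) i xi else 0) := by
      intro A
      by_cases hiA : i ∈ A
      · rw [if_pos hiA]
        have h1 : ∀ x : (j : A) → 𝒳 j.1,
            piInd 𝒳 η c gs A x
              = piInd 𝒳 η c gstar A x
                + (Real.exp s - 1)
                  * (if x ⟨i, hiA⟩ = xi then piInd 𝒳 η c gstar A x else 0) := by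
          intro x
          rw [claim1 A x, dif_pos hiA]
          by_cases hxe : x ⟨i, hiA⟩ = xi
          · rw [if_pos hxe, if_pos hxe]; ring
          · rw [if_neg hxe, if_neg hxe]; ring
        rw [Finset.sum_congr rfl fun x _ => h1 x, Finset.sum_add_distrib, ← Finset.mul_sum]
        congr 1
        unfold marg
        rw [dif_pos hiA]
      · rw [if_neg hiA, mul_zero, add_zero]
        refine Finset.sum_congr rfl fun x _ => ?_
        rw [claim1 A x, dif_neg hiA, mul_one]
    have hdual : dualObj 𝒳 η L c μ gs
        = dualObj 𝒳 η L c μ gstar + (T * (Real.exp s - 1) - s * μ i xi) := by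
      unfold dualObj
      have h1 : (∑ A ∈ SKL K L, ∑ x : (j : A) → 𝒳 j.1, piInd 𝒳 η c gs A x)
          = (∑ A ∈ SKL K L, ∑ x : (j : A) → 𝒳 j.1, piInd 𝒳 η c gstar A x)
            + (Real.exp s - 1) * T := by
        rw [Finset.sum_congr rfl fun A _ => claim2 A, Finset.sum_add_distrib, ← Finset.mul_sum]
        congr 1
        rw [hT]
        unfold totMarg SKLi
        rw [Finset.sum_filter]
      have h2 : (∑ j : Fin K, ∑ y : 𝒳 j, gs j y * μ j y)
          = (∑ j : Fin K, ∑ y : 𝒳 j, gstar j y * μ j y) + s * η * μ i xi := by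
        have e1 : (∑ j : Fin K, ∑ y : 𝒳 j, gs j y * μ j y)
            = (∑ y : 𝒳 i, gs i y * μ i y)
              + ∑ j ∈ Finset.univ.erase i, ∑ y : 𝒳 j, gs j y * μ j y :=
          (Finset.add_sum_erase Finset.univ (fun j : Fin K => ∑ y : 𝒳 j, gs j y * μ j y)
            (Finset.mem_univ i)).symm
        have e2 : (∑ j : Fin K, ∑ y : 𝒳 j, gstar j y * μ j y)
            = (∑ y : 𝒳 i, gstar i y * μ i y)
              + ∑ j ∈ Finset.univ.erase i, ∑ y : 𝒳 j, gstar j y * μ j y :=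
          (Finset.add_sum_erase Finset.univ (fun j : Fin K => ∑ y : 𝒳 j, gstar j y * μ j y)
            (Finset.mem_univ i)).symm
        have e3 : (∑ j ∈ Finset.univ.erase i, ∑ y : 𝒳 j, gs j y * μ j y)
            = ∑ j ∈ Finset.univ.erase i, ∑ y : 𝒳 j, gstar j y * μ j y := by
          refine Finset.sum_congr rfl fun j hj => ?_
          rw [hgs_ne _ (Finset.mem_erase.mp hj).1]
        have e4 : (∑ y : 𝒳 i, gs i y * μ i y)
            = (∑ y : 𝒳 i, gstar i y * μ i y) + s * η * μ i xi := by
          have h5 : ∀ y : 𝒳 i, gs i y * μ i y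
              = gstar i y * μ i y + (if y = xi then s * η * μ i y else 0) := by
            intro y; rw [hgs_i y]
            by_cases h : y = xi
            · rw [if_pos h, if_pos h]; ring
            · rw [if_neg h, if_neg h]; ring
          rw [Finset.sum_congr rfl fun y _ => h5 y, Finset.sum_add_distrib,
            Finset.sum_ite_eq' Finset.univ xi (fun y => s * η * μ i y),
            if_pos (Finset.mem_univ xi)]
        rw [e1, e2, e3, e4]
        ring
      rw [h1, h2]
      field_simp
      ring
    have h := hstar gs
    rw [hdual] at h
    linarith
  have hmin : IsLocalMin (fun s : ℝ => T * (Real.exp s - 1) - s * μ i xi) 0 :=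
    Filter.Eventually.of_forall fun s => by simpa using key s
  have hderiv : HasDerivAt (fun s : ℝ => T * (Real.exp s - 1) - s * μ i xi)
      (T - μ i xi) 0 := by
    have h1 : HasDerivAt (fun s : ℝ => T * (Real.exp s - 1)) (T * Real.exp 0) 0 :=
      HasDerivAt.const_mul T ((Real.hasDerivAt_exp 0).sub_const 1)
    have h2 : HasDerivAt (fun s : ℝ => s * μ i xi) (μ i xi) 0 := by
      simpa using (hasDerivAt_id (0:ℝ)).mul_const (μ i xi)
    rw [Real.exp_zero, mul_one] at h1
    exact h1.sub h2
  have h0 := hmin.hasDerivAt_eq_zero hderiv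
  linarith

lemma pad_image {K L : ℕ} (i : Fin K) (C : Finset (Fin K)) (hiC : i ∈ C) (hcard : C.card ≤ L) :
    Finset.image (fun t : Fin L => (C.sort (· ≤ ·)).getD t i) Finset.univ = C := by
  apply Finset.Subset.antisymm
  · intro a ha
    rcases Finset.mem_image.mp ha with ⟨t, _, rfl⟩
    by_cases hlt : (t : ℕ) < (C.sort (· ≤ ·)).length
    · rw [List.getD_eq_getElem _ _ hlt]
      exact (Finset.mem_sort _).mp (List.getElem_mem hlt)
    · rw [List.getD_eq_default _ _ (le_of_not_gt hlt)]
      exact hiC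
  · intro a ha
    have hmem : a ∈ C.sort (· ≤ ·) := (Finset.mem_sort _).mpr ha
    rcases List.mem_iff_get.mp hmem with ⟨k, hk⟩
    have hkL : (k : ℕ) < L := lt_of_lt_of_le (by simpa [Finset.length_sort] using k.2) hcard
    refine Finset.mem_image.mpr ⟨⟨(k : ℕ), hkL⟩, Finset.mem_univ _, ?_⟩
    rw [List.getD_eq_getElem _ _ (by simpa using k.2)]
    simpa [List.get_eq_getElem] using hk

lemma card_SKLi_le (K L : ℕ) (i : Fin K) : (SKLi K L i).card ≤ K ^ L := by
  classical
  have h := Finset.card_le_card_of_injOn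
    (s := SKLi K L i) (t := (Finset.univ : Finset (Fin L → Fin K)))
    (fun A t => (A.sort (· ≤ ·)).getD t i)
    (fun A _ => Finset.mem_univ _) ?_
  · simpa [Finset.card_univ, Fintype.card_fun] using h
  · intro A hA B hB hAB
    have hA' := Finset.mem_coe.mp hA
    have hB' := Finset.mem_coe.mp hB
    have hiA : i ∈ A := (Finset.mem_filter.mp hA').2
    have hcA : A.card ≤ L := (Finset.mem_filter.mp (Finset.mem_filter.mp hA').1).2.2
    have hiB : i ∈ B := (Finset.mem_filter.mp hB').2
    have hcB : B.card ≤ L := (Finset.mem_filter.mp (Finset.mem_filter.mp hB').1).2.2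
    have himg := congrArg (fun f : Fin L → Fin K => Finset.image f Finset.univ) hAB
    simp only at himg
    rw [pad_image i A hiA hcA, pad_image i B hiB hcB] at himg
    exact himg

lemma gstar_le_one (L : ℕ) (hL : 1 ≤ L) (η : ℝ) (hη : 0 < η)
    (c : (A : Finset (Fin K)) → ((j : A) → 𝒳 j.1) → ℝ≥0∞)
    (hc : ∀ (i : Fin K) (x : (j : ({i} : Finset (Fin K))) → 𝒳 j.1), c {i} x = 0)
    (μ : (i : Fin K) → 𝒳 i → ℝ) (hμpos : ∀ i xi, 0 < μ i xi)
    (hmass : ∑ i : Fin K, ∑ xi : 𝒳 i, μ i xi = 1)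
    (gstar : (i : Fin K) → 𝒳 i → ℝ)
    (hstat : ∀ (i : Fin K) (xi : 𝒳 i), totMarg 𝒳 L (piInd 𝒳 η c gstar) i xi = μ i xi)
    (i : Fin K) (xi : 𝒳 i) : gstar i xi ≤ 1 := by
  classical
  have hiM : i ∈ ({i} : Finset (Fin K)) := Finset.mem_singleton_self i
  letI hU : Unique { a // a ∈ ({i} : Finset (Fin K)) } :=
    { default := ⟨i, hiM⟩, uniq := fun j => Subtype.ext (Finset.mem_singleton.mp j.2) }
  set x₀ : (j : ({i} : Finset (Fin K))) → 𝒳 j.1 :=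
    fun j => cast (congrArg 𝒳 (Finset.mem_singleton.mp j.2).symm) xi with hx₀
  have hx₀i : x₀ ⟨i, hiM⟩ = xi := eq_of_heq (cast_heq _ _)
  have hsum0 : (∑ j : ({i} : Finset (Fin K)), gstar j.1 (x₀ j)) = gstar i xi := by
    rw [Fintype.sum_unique]
    exact congrArg (gstar i) hx₀i
  have hπ : piInd 𝒳 η c gstar {i} x₀ = Real.exp ((gstar i xi - 1) / η) := by
    unfold piInd
    rw [hc i x₀]
    rw [if_neg (by simp), hsum0]
    norm_num
  have hmargle : Real.exp ((gstar i xi - 1) / η)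
      ≤ marg 𝒳 {i} (piInd 𝒳 η c gstar {i}) i xi := by
    unfold marg
    rw [dif_pos hiM]
    have hs := Finset.single_le_sum
      (f := fun x : (j : ({i} : Finset (Fin K))) → 𝒳 j.1 =>
        if x ⟨i, hiM⟩ = xi then piInd 𝒳 η c gstar {i} x else 0)
      (fun x _ => by
        dsimp only; split
        · exact piInd_nonneg 𝒳 η c gstar {i} x
        · exact le_rfl)
      (Finset.mem_univ x₀)
    calc Real.exp ((gstar i xi - 1) / η)
        = (if x₀ ⟨i, hiM⟩ = xi then piInd 𝒳 η c gstar {i} x₀ else 0) := by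
          rw [if_pos hx₀i, hπ]
      _ ≤ _ := hs
  have hsingmem : ({i} : Finset (Fin K)) ∈ SKLi K L i := by
    unfold SKLi SKL
    simp [hL]
  have hle : marg 𝒳 {i} (piInd 𝒳 η c gstar {i}) i xi
      ≤ totMarg 𝒳 L (piInd 𝒳 η c gstar) i xi := by
    unfold totMarg
    exact Finset.single_le_sum
      (fun A _ => marg_nonneg 𝒳 (fun x => piInd_nonneg 𝒳 η c gstar A x) i xi) hsingmem
  have hμ1 : μ i xi ≤ 1 := by
    rw [← hmass]
    calc μ i xi ≤ ∑ y : 𝒳 i, μ i y :=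
          Finset.single_le_sum (fun y _ => (hμpos i y).le) (Finset.mem_univ xi)
      _ ≤ ∑ j : Fin K, ∑ y : 𝒳 j, μ j y :=
          Finset.single_le_sum (f := fun j : Fin K => ∑ y : 𝒳 j, μ j y)
            (fun j _ => Finset.sum_nonneg fun y _ => (hμpos j y).le) (Finset.mem_univ i)
  have hexp : Real.exp ((gstar i xi - 1) / η) ≤ 1 := by
    refine le_trans hmargle (le_trans hle ?_)
    rw [hstat i xi]; exact hμ1
  have h0 : (gstar i xi - 1) / η ≤ 0 := Real.exp_le_one_iff.mp hexp
  have h1 : gstar i xi - 1 ≤ 0 := by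
    by_contra hpos
    push_neg at hpos
    have : 0 < (gstar i xi - 1) / η := div_pos (by linarith) hη
    linarith
  linarith

/-- if `g*` minimizes the dual objective `𝒢^L`, then for every `i`
and `x_i ∈ 𝒳 i`,
`−(L−1) + η log min_{j,y} μ_j(y) − η L log(K C* n) ≤ g*_i(x_i) ≤ 1`. -/
theorem stmt12 (K L : ℕ) (hK : 0 < K) (hL : 1 ≤ L) (hLK : L ≤ K)
    (𝒳 : Fin K → Type*) [∀ i, Fintype (𝒳 i)] [∀ i, DecidableEq (𝒳 i)]
    [∀ i, Nonempty (𝒳 i)]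
    (η : ℝ) (hη : 0 < η) (n : ℝ) (hn : 0 < n)
    (c : (A : Finset (Fin K)) → ((j : A) → 𝒳 j.1) → ℝ≥0∞)
    (hc : ∀ (i : Fin K) (x : (j : ({i} : Finset (Fin K))) → 𝒳 j.1), c {i} x = 0)
    (μ : (i : Fin K) → 𝒳 i → ℝ) (hμpos : ∀ i xi, 0 < μ i xi)
    (hmass : ∑ i : Fin K, ∑ xi : 𝒳 i, μ i xi = 1)
    (gstar : (i : Fin K) → 𝒳 i → ℝ)
    (hstar : ∀ g' : (i : Fin K) → 𝒳 i → ℝ,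
      dualObj 𝒳 η L c μ gstar ≤ dualObj 𝒳 η L c μ g') :
    ∀ (i : Fin K) (xi : 𝒳 i),
      -((L : ℝ) - 1) + η * Real.log (muMin 𝒳 μ)
          - η * L * Real.log (K * Cstar 𝒳 n * n) ≤ gstar i xi ∧
      gstar i xi ≤ 1 := by
  classical
  intro i xi
  have hstat : ∀ (j : Fin K) (y : 𝒳 j), totMarg 𝒳 L (piInd 𝒳 η c gstar) j y = μ j y :=
    stationarity 𝒳 η hη L c μ gstar hstar
  have hub : ∀ (j : Fin K) (y : 𝒳 j), gstar j y ≤ 1 :=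
    gstar_le_one 𝒳 L hL η hη c hc μ hμpos hmass gstar hstat
  refine ⟨?_, hub i xi⟩
  -- notation
  set m : ℕ := Finset.univ.sup fun j : Fin K => Fintype.card (𝒳 j) with hm
  have hmj : ∀ j : Fin K, Fintype.card (𝒳 j) ≤ m := fun j => by
    rw [hm]; exact Finset.le_sup (f := fun j : Fin K => Fintype.card (𝒳 j)) (Finset.mem_univ j)
  have hm1 : 1 ≤ m := le_trans Fintype.card_pos (hmj i)
  have hK1 : (1:ℝ) ≤ (K:ℝ) := by exact_mod_cast hK
  have hm1' : (1:ℝ) ≤ (m:ℝ) := by exact_mod_cast hm1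
  have hKm1 : (1:ℝ) ≤ (K:ℝ) * (m:ℝ) := by nlinarith
  have hCn : (K:ℝ) * Cstar 𝒳 n * n = (K:ℝ) * (m:ℝ) := by
    unfold Cstar
    rw [← hm]
    field_simp
  set B : ℝ := Real.exp ((gstar i xi + (L:ℝ) - 2) / η) with hB
  have hBpos : 0 < B := Real.exp_pos _
  -- bound each marginal
  have hmargA : ∀ A ∈ SKLi K L i,
      marg 𝒳 A (piInd 𝒳 η c gstar A) i xi ≤ ((m ^ L : ℕ) : ℝ) * B := by
    intro A hA
    have hiA : i ∈ A := (Finset.mem_filter.mp hA).2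
    have hcA : A.card ≤ L := (Finset.mem_filter.mp (Finset.mem_filter.mp hA).1).2.2
    have hterm : ∀ x : (j : A) → 𝒳 j.1,
        (if x ⟨i, hiA⟩ = xi then piInd 𝒳 η c gstar A x else 0) ≤ B := by
      intro x
      by_cases hxe : x ⟨i, hiA⟩ = xi
      · rw [if_pos hxe]
        unfold piInd
        by_cases hct : c A x = ⊤
        · rw [if_pos hct]; exact hBpos.le
        · rw [if_neg hct, hB]
          apply Real.exp_le_exp.mpr
          have hS : (∑ j : A, gstar j.1 (x j)) ≤ gstar i xi + ((L:ℝ) - 1) := by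
            have h1 : (∑ j : A, gstar j.1 (x j))
                = gstar i (x ⟨i, hiA⟩)
                  + ∑ j ∈ Finset.univ.erase (⟨i, hiA⟩ : A), gstar j.1 (x j) :=
              (Finset.add_sum_erase Finset.univ (fun j : A => gstar j.1 (x j))
                (Finset.mem_univ (⟨i, hiA⟩ : A))).symm
            rw [h1, hxe]
            have h2 : (∑ j ∈ Finset.univ.erase (⟨i, hiA⟩ : A), gstar j.1 (x j))
                ≤ ((Finset.univ.erase (⟨i, hiA⟩ : A)).card : ℝ) := by
              have := Finset.sum_le_card_nsmul (Finset.univ.erase (⟨i, hiA⟩ : A))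
                (fun j : A => gstar j.1 (x j)) 1 (fun j _ => hub j.1 (x j))
              rwa [nsmul_eq_mul, mul_one] at this
            have h3 : ((Finset.univ.erase (⟨i, hiA⟩ : A)).card : ℝ) ≤ (L:ℝ) - 1 := by
              rw [Finset.card_erase_of_mem (Finset.mem_univ _), Finset.card_univ,
                Fintype.card_coe]
              have hA1 : 1 ≤ A.card := Finset.card_pos.mpr ⟨i, hiA⟩
              have hsub : (A.card - 1 : ℕ) ≤ L - 1 := by omega
              calc ((A.card - 1 : ℕ) : ℝ) ≤ ((L - 1 : ℕ) : ℝ) := by exact_mod_cast hsub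
                _ = (L:ℝ) - 1 := by
                    rw [Nat.cast_sub hL]; norm_num
            linarith
          have hct0 : 0 ≤ (c A x).toReal := ENNReal.toReal_nonneg
          refine (div_le_div_iff_of_pos_right hη).mpr ?_
          linarith
      · rw [if_neg hxe]; exact hBpos.le
    unfold marg
    rw [dif_pos hiA]
    calc (∑ x : (j : A) → 𝒳 j.1, if x ⟨i, hiA⟩ = xi then piInd 𝒳 η c gstar A x else 0)
        ≤ ∑ _x : (j : A) → 𝒳 j.1, B := Finset.sum_le_sum fun x _ => hterm x
      _ = (Fintype.card ((j : A) → 𝒳 j.1) : ℝ) * B := by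
          rw [Finset.sum_const, Finset.card_univ, nsmul_eq_mul]
      _ ≤ ((m ^ L : ℕ) : ℝ) * B := by
          refine mul_le_mul_of_nonneg_right ?_ hBpos.le
          have hcard : Fintype.card ((j : A) → 𝒳 j.1) ≤ m ^ L := by
            rw [Fintype.card_pi]
            calc (∏ j : A, Fintype.card (𝒳 j.1))
                ≤ ∏ _j : A, m :=
                  Finset.prod_le_prod' (fun j _ => hmj j.1)
              _ = m ^ A.card := by rw [Finset.prod_const, Finset.card_univ, Fintype.card_coe]
              _ ≤ m ^ L := Nat.pow_le_pow_right hm1 hcA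
          exact_mod_cast hcard
  have hTle : μ i xi ≤ (((SKLi K L i).card : ℕ) : ℝ) * (((m ^ L : ℕ) : ℝ) * B) := by
    rw [← hstat i xi]
    unfold totMarg
    calc (∑ A ∈ SKLi K L i, marg 𝒳 A (piInd 𝒳 η c gstar A) i xi)
        ≤ ∑ _A ∈ SKLi K L i, ((m ^ L : ℕ) : ℝ) * B := Finset.sum_le_sum hmargA
      _ = ((SKLi K L i).card : ℝ) * (((m ^ L : ℕ) : ℝ) * B) := by
          rw [Finset.sum_const, nsmul_eq_mul]
  have hNle : ((SKLi K L i).card : ℝ) ≤ ((K ^ L : ℕ) : ℝ) := by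
    exact_mod_cast card_SKLi_le K L i
  have hfinal : μ i xi ≤ ((K:ℝ) * (m:ℝ)) ^ L * B := by
    have h4 : (((SKLi K L i).card : ℕ) : ℝ) * (((m ^ L : ℕ) : ℝ) * B)
        ≤ ((K ^ L : ℕ) : ℝ) * (((m ^ L : ℕ) : ℝ) * B) :=
      mul_le_mul_of_nonneg_right hNle (by positivity)
    have h5 : ((K ^ L : ℕ) : ℝ) * (((m ^ L : ℕ) : ℝ) * B) = ((K:ℝ) * (m:ℝ)) ^ L * B := by
      push_cast; ring
    linarith
  have hKmpos : (0:ℝ) < (K:ℝ) * (m:ℝ) := by linarith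
  have hKmLpos : (0:ℝ) < ((K:ℝ) * (m:ℝ)) ^ L := by positivity
  have hlog : Real.log (μ i xi)
      ≤ (L:ℝ) * Real.log ((K:ℝ) * (m:ℝ)) + (gstar i xi + (L:ℝ) - 2) / η := by
    calc Real.log (μ i xi) ≤ Real.log (((K:ℝ) * (m:ℝ)) ^ L * B) :=
          Real.log_le_log (hμpos i xi) hfinal
      _ = (L:ℝ) * Real.log ((K:ℝ) * (m:ℝ)) + (gstar i xi + (L:ℝ) - 2) / η := by
          rw [Real.log_mul (ne_of_gt hKmLpos) (ne_of_gt hBpos), Real.log_pow, hB,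
            Real.log_exp]
  have hmul : η * Real.log (μ i xi)
      ≤ η * (L:ℝ) * Real.log ((K:ℝ) * (m:ℝ)) + (gstar i xi + (L:ℝ) - 2) := by
    have h6 := mul_le_mul_of_nonneg_left hlog hη.le
    have h7 : η * ((L:ℝ) * Real.log ((K:ℝ) * (m:ℝ)) + (gstar i xi + (L:ℝ) - 2) / η)
        = η * (L:ℝ) * Real.log ((K:ℝ) * (m:ℝ)) + (gstar i xi + (L:ℝ) - 2) := by
      field_simp
    linarith
  have hSfin : {v : ℝ | ∃ (j : Fin K) (y : 𝒳 j), v = μ j y}.Finite := by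
    have hrange : {v : ℝ | ∃ (j : Fin K) (y : 𝒳 j), v = μ j y}
        = Set.range (fun p : Σ j : Fin K, 𝒳 j => μ p.1 p.2) := by
      ext v
      constructor
      · rintro ⟨j, y, rfl⟩; exact ⟨⟨j, y⟩, rfl⟩
      · rintro ⟨⟨j, y⟩, rfl⟩; exact ⟨j, y, rfl⟩
    rw [hrange]
    exact Set.finite_range _
  have hmuMin_le : muMin 𝒳 μ ≤ μ i xi := csInf_le hSfin.bddBelow ⟨i, xi, rfl⟩
  have hmuMin_pos : 0 < muMin 𝒳 μ := by
    have hSne : {v : ℝ | ∃ (j : Fin K) (y : 𝒳 j), v = μ j y}.Nonempty :=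
      ⟨μ i xi, i, xi, rfl⟩
    have hmem := hSne.csInf_mem hSfin
    rcases hmem with ⟨j, y, hj⟩
    unfold muMin
    rw [hj]
    exact hμpos j y
  have hloglog : η * Real.log (muMin 𝒳 μ) ≤ η * Real.log (μ i xi) :=
    mul_le_mul_of_nonneg_left (Real.log_le_log hmuMin_pos hmuMin_le) hη.le
  rw [hCn]
  linarith

end
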